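/- Assume additionally that there is a linear involution θ : 𝔤 → 𝔤 with θ(𝔤_γ) = 𝔤_{−γ} for all γ ∈ Δ(𝔤) and π(θ(Y)) = −π(Y)* for all Y ∈ 𝔤 (where π(Y)* is the adjoint of π(Y)), and a subset Δ(𝔤)⁺ ⊆ Δ(𝔤) with Δ(𝔤) the disjoint union of Δ(𝔤)⁺ and −Δ(𝔤)⁺. Then an A-invariant subspace W of V is nice if and only if π(𝔤_γ)W ⊥ W for every γ ∈ Δ(𝔤)⁺. -/

import Mathlib

open scoped InnerProductSpace
open Finset
open scoped Classical

/-- The (restricted) moment map of a linear family of operators `π` on an inner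
product space `V`: `momentMap π v` is the unique element of `E` with
`⟪momentMap π v, Y⟫ = ⟪π Y v, v⟫ / ‖v‖²` for all `Y`. -/
noncomputable def momentMap {E V : Type*} [NormedAddCommGroup E] [InnerProductSpace ℝ E]
    [FiniteDimensional ℝ E] [NormedAddCommGroup V] [InnerProductSpace ℝ V]
    (π : E →ₗ[ℝ] V →L[ℝ] V) (v : V) : E :=
  (InnerProductSpace.toDual ℝ E).symm <| LinearMap.toContinuousLinearMap
    { toFun := fun X => ⟪(π X) v, v⟫_ℝ / ‖v‖ ^ 2
      map_add' := fun X Y => by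
        simp [map_add, ContinuousLinearMap.add_apply, inner_add_left, add_div]
      map_smul' := fun c X => by
        simp [map_smul, ContinuousLinearMap.smul_apply, inner_smul_left, mul_div_assoc] }


lemma momentMap_inner {E V : Type*} [NormedAddCommGroup E] [InnerProductSpace ℝ E]
    [FiniteDimensional ℝ E] [NormedAddCommGroup V] [InnerProductSpace ℝ V]
    (π : E →ₗ[ℝ] V →L[ℝ] V) (v : V) (Y : E) :
    ⟪momentMap π v, Y⟫_ℝ = ⟪(π Y) v, v⟫_ℝ / ‖v‖ ^ 2 := by
  simp [momentMap, InnerProductSpace.toDual_symm_apply]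

/-- The weight space `V_α = {v : ∀ X ∈ 𝔞, π(X)v = ⟪α,X⟫v}`. -/
def wtSpace {E V : Type*} [NormedAddCommGroup E] [InnerProductSpace ℝ E]
    [NormedAddCommGroup V] [InnerProductSpace ℝ V]
    (π : E →ₗ[ℝ] V →L[ℝ] V) (𝔞 : Submodule ℝ E) (α : E) : Submodule ℝ V where
  carrier := {v | ∀ X ∈ 𝔞, (π X) v = ⟪α, X⟫_ℝ • v}
  add_mem' := fun {a b} ha hb X hX => by rw [map_add, ha X hX, hb X hX, smul_add]
  zero_mem' := fun X hX => by simp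
  smul_mem' := fun t a ha X hX => by rw [map_smul, ha X hX, smul_comm]

/-- The (restricted) root space `𝔤_γ = {Y : ∀ X ∈ 𝔞, [X,Y] = ⟪γ,X⟫Y}`. -/
def rootSpace {E : Type*} [NormedAddCommGroup E] [InnerProductSpace ℝ E]
    (bk : E →ₗ[ℝ] E →ₗ[ℝ] E) (𝔞 : Submodule ℝ E) (γ : E) : Submodule ℝ E where
  carrier := {Y | ∀ X ∈ 𝔞, bk X Y = ⟪γ, X⟫_ℝ • Y}
  add_mem' := fun {a b} ha hb X hX => by rw [map_add, ha X hX, hb X hX, smul_add]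
  zero_mem' := fun X hX => by simp
  smul_mem' := fun t a ha X hX => by rw [map_smul, ha X hX, smul_comm]

/-- A subspace `W ⊆ V` is `A`-invariant if `π(X)W ⊆ W` for all `X ∈ 𝔞`. -/
def AInvariant {E V : Type*} [NormedAddCommGroup E] [InnerProductSpace ℝ E]
    [NormedAddCommGroup V] [InnerProductSpace ℝ V]
    (π : E →ₗ[ℝ] V →L[ℝ] V) (𝔞 : Submodule ℝ E) (W : Submodule ℝ V) : Prop :=
  ∀ X ∈ 𝔞, ∀ w ∈ W, (π X) w ∈ W

/-- An `A`-invariant subspace `W ⊆ V` is a nice space if `momentMap π w ∈ 𝔞` for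
every nonzero `w ∈ W`. -/
def IsNiceSpace {E V : Type*} [NormedAddCommGroup E] [InnerProductSpace ℝ E]
    [FiniteDimensional ℝ E] [NormedAddCommGroup V] [InnerProductSpace ℝ V]
    (π : E →ₗ[ℝ] V →L[ℝ] V) (𝔞 : Submodule ℝ E) (W : Submodule ℝ V) : Prop :=
  AInvariant π 𝔞 W ∧ ∀ w ∈ W, w ≠ 0 → momentMap π w ∈ 𝔞

/-- given a Cartan-type involution `θ` with `θ(𝔤_γ) = 𝔤_{−γ}` and
`π(θ(Y)) = −π(Y)*`, and a choice of positive roots `Δ(𝔤)⁺`, an `A`-invariant subspace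
`W` is nice iff `π(𝔤_γ)W ⊥ W` for every `γ ∈ Δ(𝔤)⁺`. -/
theorem isNice_iff_positive_roots_orthogonality
    {𝔤 V : Type*} [NormedAddCommGroup 𝔤] [InnerProductSpace ℝ 𝔤] [FiniteDimensional ℝ 𝔤]
    [NormedAddCommGroup V] [InnerProductSpace ℝ V] [FiniteDimensional ℝ V]
    -- the Lie bracket of `𝔤` and the representation `π : 𝔤 → 𝔤𝔩(V)`:
    (bk : 𝔤 →ₗ[ℝ] 𝔤 →ₗ[ℝ] 𝔤)
    (hbk_alt : ∀ X : 𝔤, bk X X = 0)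
    (hbk_jac : ∀ X Y Z : 𝔤, bk X (bk Y Z) + bk Y (bk Z X) + bk Z (bk X Y) = 0)
    (π : 𝔤 →ₗ[ℝ] V →L[ℝ] V)
    (hrep : ∀ X Y : 𝔤, π (bk X Y) = π X * π Y - π Y * π X)
    -- `𝔞` is an abelian subalgebra acting by self-adjoint operators:
    (𝔞 : Submodule ℝ 𝔤)
    (hab : ∀ X ∈ 𝔞, ∀ Y ∈ 𝔞, bk X Y = 0)
    (hsa : ∀ X ∈ 𝔞, ∀ v w : V, ⟪(π X) v, w⟫_ℝ = ⟪v, (π X) w⟫_ℝ)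
    -- roots and weights:
    (Δ𝔤 : Finset 𝔤) (hΔ𝔤 : ∀ γ ∈ Δ𝔤, γ ∈ 𝔞 ∧ γ ≠ 0)
    (ΔV : Finset 𝔤) (hΔV : ∀ α ∈ ΔV, α ∈ 𝔞)
    -- `𝔤₀ = 𝔞 ⊕ 𝔪` is the centralizer of `𝔞`, `π` is skew-adjoint on `𝔪`:
    (𝔪 : Submodule ℝ 𝔤)
    (hskew : ∀ Y ∈ 𝔪, ∀ v w : V, ⟪(π Y) v, w⟫_ℝ = -⟪v, (π Y) w⟫_ℝ)
    (h𝔞𝔪 : ∀ X ∈ 𝔞, ∀ Y ∈ 𝔪, ⟪X, Y⟫_ℝ = 0)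
    (h𝔤₀ : ∀ Z : 𝔤, (∀ X ∈ 𝔞, bk X Z = 0) ↔ Z ∈ 𝔞 ⊔ 𝔪)
    -- the orthogonal restricted-root space decomposition of `𝔤`:
    (h𝔤dec : (𝔞 ⊔ 𝔪) ⊔ (⨆ γ ∈ Δ𝔤, rootSpace bk 𝔞 γ) = ⊤)
    (h𝔤orth : ∀ γ ∈ Δ𝔤, ∀ Y ∈ rootSpace bk 𝔞 γ, ∀ Z : 𝔤,
      (Z ∈ 𝔞 ⊔ 𝔪 ∨ ∃ γ' ∈ Δ𝔤, γ' ≠ γ ∧ Z ∈ rootSpace bk 𝔞 γ') → ⟪Y, Z⟫_ℝ = 0)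
    -- the weight space decomposition of `V`:
    (hVdec : (⨆ α ∈ ΔV, wtSpace π 𝔞 α) = ⊤)
    (W : Submodule ℝ V) (hWinv : AInvariant π 𝔞 W)
    -- the Cartan involution `θ`:
    (θ : 𝔤 →ₗ[ℝ] 𝔤) (hθinv : ∀ Z : 𝔤, θ (θ Z) = Z)
    (hθroot : ∀ γ ∈ Δ𝔤, Submodule.map θ (rootSpace bk 𝔞 γ) = rootSpace bk 𝔞 (-γ))
    (hθadj : ∀ Z : 𝔤, ∀ v w : V, ⟪(π (θ Z)) v, w⟫_ℝ = -⟪v, (π Z) w⟫_ℝ)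
    -- a set of positive roots:
    (Δp : Finset 𝔤) (hΔp : ∀ γ : 𝔤, γ ∈ Δ𝔤 ↔ (γ ∈ Δp ∨ -γ ∈ Δp))
    (hΔpdisj : ∀ γ ∈ Δp, -γ ∉ Δp)
    :
    (∀ w ∈ W, w ≠ 0 → momentMap π w ∈ 𝔞) ↔
      (∀ γ ∈ Δp, ∀ Y ∈ rootSpace bk 𝔞 γ, ∀ u ∈ W, ∀ z ∈ W, ⟪(π Y) u, z⟫_ℝ = 0) := by
  constructor
  · -- nice → orthogonality for positive roots
    intro hm γ hγp Y hY u hu z hz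
    have hγΔ : γ ∈ Δ𝔤 := (hΔp γ).mpr (Or.inl hγp)
    obtain ⟨hγ𝔞, hγ0⟩ := hΔ𝔤 γ hγΔ
    -- ⟪π Y w, w⟫ = 0 for w ∈ W
    have hzero : ∀ w ∈ W, ⟪(π Y) w, w⟫_ℝ = 0 := by
      intro w hw
      by_cases h0 : w = 0
      · simp [h0]
      · have h1 := momentMap_inner π w Y
        have h2 : ⟪Y, momentMap π w⟫_ℝ = 0 :=
          h𝔤orth γ hγΔ Y hY _ (Or.inl (Submodule.mem_sup_left (hm w hw h0)))
        have h3 : ⟪momentMap π w, Y⟫_ℝ = 0 := by rw [real_inner_comm]; exact h2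
        rw [h3] at h1
        have h4 := div_eq_zero_iff.mp h1.symm
        rcases h4 with h4 | h4
        · exact h4
        · exact absurd h4 (pow_ne_zero 2 (norm_ne_zero_iff.mpr h0))
    have hanti : ∀ a ∈ W, ∀ b ∈ W, ⟪(π Y) a, b⟫_ℝ = -⟪(π Y) b, a⟫_ℝ := by
      intro a ha b hb
      have h1 := hzero (a + b) (W.add_mem ha hb)
      rw [map_add, inner_add_left, inner_add_right, inner_add_right,
        hzero a ha, hzero b hb] at h1
      linarith
    set c : ℝ := ⟪γ, γ⟫_ℝ with hc
    have hcne : c ≠ 0 := fun h => hγ0 (inner_self_eq_zero.mp h)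
    have hrel : ∀ a b : V,
        ⟪(π Y) ((π γ) a), b⟫_ℝ = ⟪(π Y) a, (π γ) b⟫_ℝ - c * ⟪(π Y) a, b⟫_ℝ := by
      intro a b
      have hbkY : bk γ Y = c • Y := hY γ hγ𝔞
      have h5 := hrep γ Y
      rw [hbkY, map_smul] at h5
      have h6 := congrArg (fun T : V →L[ℝ] V => T a) h5
      simp only [ContinuousLinearMap.smul_apply, ContinuousLinearMap.sub_apply,
        ContinuousLinearMap.mul_apply] at h6
      -- h6 : c • π Y a = π γ (π Y a) - π Y (π γ a)
      have h7 : (π Y) ((π γ) a) = (π γ) ((π Y) a) - c • ((π Y) a) := by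
        rw [h6]; abel
      rw [h7, inner_sub_left, real_inner_smul_left, hsa γ hγ𝔞]
    have hπu : (π γ) u ∈ W := hWinv γ hγ𝔞 u hu
    have hπz : (π γ) z ∈ W := hWinv γ hγ𝔞 z hz
    have Eq1 := hrel u z
    have Eq2 := hrel z u
    have A1 := hanti ((π γ) u) hπu z hz
    have A2 := hanti u hu ((π γ) z) hπz
    have A3 := hanti u hu z hz
    have hcr : c * ⟪(π Y) u, z⟫_ℝ = 0 := by
      linear_combination (Eq1 - Eq2 - A1 + A2 + c * A3) / 2
    exact (mul_eq_zero.mp hcr).resolve_left hcne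
  · -- orthogonality → nice
    intro hortho w hw hw0
    have hall : ∀ γ ∈ Δ𝔤, ∀ Y ∈ rootSpace bk 𝔞 γ, ∀ u ∈ W, ∀ z ∈ W,
        ⟪(π Y) u, z⟫_ℝ = 0 := by
      intro γ hγ Y hY u hu z hz
      rcases (hΔp γ).mp hγ with hp | hp
      · exact hortho γ hp Y hY u hu z hz
      · have hθY : θ Y ∈ rootSpace bk 𝔞 (-γ) := by
          rw [← hθroot γ hγ]; exact ⟨Y, hY, rfl⟩
        have h1 : ⟪(π (θ (θ Y))) u, z⟫_ℝ = -⟪u, (π (θ Y)) z⟫_ℝ := hθadj (θ Y) u z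
        rw [hθinv Y] at h1
        rw [h1, real_inner_comm, hortho (-γ) hp (θ Y) hθY z hz u hu, neg_zero]
    set m := momentMap π w with hmdef
    have hmY : ∀ γ ∈ Δ𝔤, ∀ Y ∈ rootSpace bk 𝔞 γ, ⟪m, Y⟫_ℝ = 0 := by
      intro γ hγ Y hY
      rw [hmdef, momentMap_inner, hall γ hγ Y hY w hw w hw, zero_div]
    have hm𝔪 : ∀ Z ∈ 𝔪, ⟪m, Z⟫_ℝ = 0 := by
      intro Z hZ
      have h1 : ⟪(π Z) w, w⟫_ℝ = 0 := by
        have h2 := hskew Z hZ w w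
        have h3 : ⟪w, (π Z) w⟫_ℝ = ⟪(π Z) w, w⟫_ℝ := real_inner_comm _ _
        linarith
      rw [hmdef, momentMap_inner, h1, zero_div]
    set K := 𝔪 ⊔ (⨆ γ ∈ Δ𝔤, rootSpace bk 𝔞 γ) with hKdef
    have hKtop : 𝔞 ⊔ K = ⊤ := by rw [hKdef, ← sup_assoc]; exact h𝔤dec
    have hmK : ∀ k ∈ K, ⟪m, k⟫_ℝ = 0 := by
      intro k hk
      have hle : K ≤ LinearMap.ker ((innerSL ℝ m : 𝔤 →L[ℝ] ℝ) : 𝔤 →ₗ[ℝ] ℝ) := by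
        refine sup_le (fun Z hZ => ?_) (iSup₂_le fun γ hγ => fun Y hY => ?_)
        · exact LinearMap.mem_ker.mpr (hm𝔪 Z hZ)
        · exact LinearMap.mem_ker.mpr (hmY γ hγ Y hY)
      exact LinearMap.mem_ker.mp (hle hk)
    have haK : ∀ a ∈ 𝔞, ∀ k ∈ K, ⟪a, k⟫_ℝ = 0 := by
      intro a ha k hk
      have hle : K ≤ LinearMap.ker ((innerSL ℝ a : 𝔤 →L[ℝ] ℝ) : 𝔤 →ₗ[ℝ] ℝ) := by
        refine sup_le (fun Z hZ => ?_) (iSup₂_le fun γ hγ => fun Y hY => ?_)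
        · exact LinearMap.mem_ker.mpr (h𝔞𝔪 a ha Z hZ)
        · refine LinearMap.mem_ker.mpr ?_
          have := h𝔤orth γ hγ Y hY a (Or.inl (Submodule.mem_sup_left ha))
          simpa [real_inner_comm] using this
      exact LinearMap.mem_ker.mp (hle hk)
    have : m ∈ 𝔞 ⊔ K := hKtop ▸ Submodule.mem_top
    obtain ⟨a, ha, k, hk, hak⟩ := Submodule.mem_sup.mp this
    have hkk : ⟪k, k⟫_ℝ = 0 := by
      have h1 : ⟪m, k⟫_ℝ = 0 := hmK k hk
      have h2 : ⟪a, k⟫_ℝ = 0 := haK a ha k hk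
      rw [← hak, inner_add_left, h2] at h1
      linarith
    have hk0 : k = 0 := inner_self_eq_zero.mp hkk
    have hma : m = a := by rw [← hak, hk0, add_zero]
    rw [hma]
    exact ha
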